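/- (Weighted cocoercivity-type inequality for curvature-bounded functions.) Let L > 0 and μ < L, and let f ∈ F_{μ,L}. Then for all x, y ∈ H and all subgradients g_x ∈ ∂f(x) and g_y ∈ ∂f(y): ⟨g_x − g_y, x − y⟩ ≥ (1/L)·‖g_x − g_y‖² + (μ/(L(L − μ)))·‖g_x − g_y − L(x − y)‖². -/

import Mathlib

open RealInnerProductSpace

variable {H : Type*} [NormedAddCommGroup H] [InnerProductSpace ℝ H]

/-- `f` has lower curvature `μ`, i.e. `f - (μ/2)‖·‖²` is convex. -/
def HasLowerCurvature (μ : ℝ) (f : H → ℝ) : Prop :=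
  ConvexOn ℝ Set.univ fun x => f x - μ / 2 * ‖x‖ ^ 2

/-- `f` has upper curvature `L`, i.e. `(L/2)‖·‖² - f` is convex. -/
def HasUpperCurvature (L : ℝ) (f : H → ℝ) : Prop :=
  ConvexOn ℝ Set.univ fun x => L / 2 * ‖x‖ ^ 2 - f x

/-- `g` is a subgradient of `f` (of lower curvature `μ`) at `x`. -/
def IsSubgradient (μ : ℝ) (f : H → ℝ) (x g : H) : Prop :=
  ∀ y, f y ≥ f x + ⟪g, y - x⟫ + μ / 2 * ‖y - x‖ ^ 2


lemma aux_le {A B C : ℝ} (h : ∀ s : ℝ, 0 < s → A ≤ B + s * C) : A ≤ B := by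
  by_contra hc
  push_neg at hc
  rcases le_or_gt C 0 with h0 | h0
  · have := h 1 one_pos; nlinarith
  · have h1 := h ((A - B) / (2 * C)) (div_pos (by linarith) (by linarith))
    have h2 : (A - B) / (2 * C) * C = (A - B) / 2 := by field_simp
    linarith

lemma descent (L mu : ℝ) (f : H → ℝ)
    (hup : HasUpperCurvature L f) (x g : H) (hg : IsSubgradient mu f x g) (z : H) :
    f z ≤ f x + ⟪g, z - x⟫ + L / 2 * ‖z - x‖ ^ 2 := by
  apply aux_le (C := (L - mu) / 2 * ‖z - x‖ ^ 2)
  intro s hs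
  set w := x + s • (x - z) with hw
  have h1s : (0 : ℝ) < 1 + s := by linarith
  have hxw : (1 / (1 + s)) • w + (s / (1 + s)) • z = x := by
    rw [hw]; match_scalars <;> field_simp <;> ring
  have hcomb := hup.2 (Set.mem_univ w) (Set.mem_univ z)
    (show (0:ℝ) ≤ 1 / (1 + s) by positivity) (show (0:ℝ) ≤ s / (1 + s) by positivity)
    (show 1 / (1 + s) + s / (1 + s) = 1 by field_simp)
  rw [hxw] at hcomb
  simp only [smul_eq_mul] at hcomb
  have key2 : (1 + s) * (L / 2 * ‖x‖ ^ 2 - f x) ≤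
      (L / 2 * ‖w‖ ^ 2 - f w) + s * (L / 2 * ‖z‖ ^ 2 - f z) := by
    have h2 := mul_le_mul_of_nonneg_left hcomb h1s.le
    calc (1 + s) * (L / 2 * ‖x‖ ^ 2 - f x)
        ≤ (1 + s) * (1 / (1 + s) * (L / 2 * ‖w‖ ^ 2 - f w) +
            s / (1 + s) * (L / 2 * ‖z‖ ^ 2 - f z)) := h2
      _ = (L / 2 * ‖w‖ ^ 2 - f w) + s * (L / 2 * ‖z‖ ^ 2 - f z) := by
          field_simp
  have hfw := hg w
  have hwx : w - x = s • (x - z) := by rw [hw]; abel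
  have e1 : ⟪g, w - x⟫ = s * ⟪g, x - z⟫ := by rw [hwx, real_inner_smul_right]
  have e2 : ‖w - x‖ ^ 2 = s ^ 2 * ‖x - z‖ ^ 2 := by
    rw [hwx, norm_smul]; simp [mul_pow, sq_abs]
  have e3 : ‖w‖ ^ 2 = ‖x‖ ^ 2 + 2 * (s * ⟪x, x - z⟫) + s ^ 2 * ‖x - z‖ ^ 2 := by
    rw [hw, @norm_add_sq_real, real_inner_smul_right, norm_smul]
    simp [mul_pow, sq_abs]
  have e4 : ‖z - x‖ ^ 2 = ‖z‖ ^ 2 - 2 * ⟪z, x⟫ + ‖x‖ ^ 2 := by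
    rw [@norm_sub_sq_real]
  have e5 : ‖x - z‖ ^ 2 = ‖x‖ ^ 2 - 2 * ⟪x, z⟫ + ‖z‖ ^ 2 := by
    rw [@norm_sub_sq_real]
  have e6 : ⟪g, z - x⟫ = -⟪g, x - z⟫ := by
    rw [← neg_sub x z, inner_neg_right]
  have e7 : ⟪x, x - z⟫ = ‖x‖ ^ 2 - ⟪x, z⟫ := by
    rw [inner_sub_right, real_inner_self_eq_norm_sq]
  have e8 : ⟪z, x⟫ = ⟪x, z⟫ := real_inner_comm x z
  rw [e1, e2] at hfw
  rw [e6, e4, e8]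
  rw [e5] at hfw
  rw [e3, e7, e5] at key2
  have hm : s * f z ≤ s * (f x + -⟪g, x - z⟫ +
      L / 2 * (‖z‖ ^ 2 - 2 * ⟪x, z⟫ + ‖x‖ ^ 2) +
      s * ((L - mu) / 2 * (‖z‖ ^ 2 - 2 * ⟪x, z⟫ + ‖x‖ ^ 2))) := by nlinarith [key2, hfw]
  exact le_of_mul_le_mul_left hm hs


set_option maxHeartbeats 1000000 in
/-- weighted cocoercivity-type inequality. -/
theorem curvature_cocoercivity
    (L mu : ℝ) (hL : 0 < L) (hmuL : mu < L)
    (f : H → ℝ) (hlo : HasLowerCurvature mu f) (hup : HasUpperCurvature L f)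
    (x y gx gy : H)
    (hgx : IsSubgradient mu f x gx) (hgy : IsSubgradient mu f y gy) :
    ⟪gx - gy, x - y⟫ ≥
      (1 / L) * ‖gx - gy‖ ^ 2 +
      mu / (L * (L - mu)) * ‖gx - gy - L • (x - y)‖ ^ 2 := by
  have hMpos : (0:ℝ) < L - mu := by linarith
  obtain ⟨k, hkdef⟩ : ∃ k : ℝ, k = (L - mu)⁻¹ := ⟨_, rfl⟩
  have hk : k * (L - mu) = 1 := by rw [hkdef]; exact inv_mul_cancel₀ hMpos.ne'
  obtain ⟨d, hdg⟩ : ∃ d : H, d = gx - gy - L • (x - y) := ⟨_, rfl⟩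
  obtain ⟨z1, hz1⟩ : ∃ z1 : H, z1 = y - k • d := ⟨_, rfl⟩
  obtain ⟨z2, hz2⟩ : ∃ z2 : H, z2 = x + k • d := ⟨_, rfl⟩
  -- expansions
  have hz1y : z1 - y = -(k • d) := by rw [hz1]; abel
  have hz1x : z1 - x = -((x - y) + k • d) := by rw [hz1]; abel
  have hz2x : z2 - x = k • d := by rw [hz2]; abel
  have hz2y : z2 - y = (x - y) + k • d := by rw [hz2]; abel
  have exp1 : ⟪gy, z1 - y⟫ = -(k * ⟪gy, d⟫) := by
    rw [hz1y, inner_neg_right, real_inner_smul_right]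
  have exp2 : ‖z1 - y‖ ^ 2 = k ^ 2 * ‖d‖ ^ 2 := by
    rw [hz1y, norm_neg, norm_smul, mul_pow, Real.norm_eq_abs, sq_abs]
  have exp3 : ⟪gx, z1 - x⟫ = -⟪gx, x - y⟫ - k * ⟪gx, d⟫ := by
    rw [hz1x, inner_neg_right, inner_add_right, real_inner_smul_right]; ring
  have exp4 : ‖z1 - x‖ ^ 2 = ‖x - y‖ ^ 2 + 2 * (k * ⟪x - y, d⟫) + k ^ 2 * ‖d‖ ^ 2 := by
    rw [hz1x, norm_neg, @norm_add_sq_real, real_inner_smul_right, norm_smul, mul_pow, Real.norm_eq_abs, sq_abs]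
  have exp5 : ⟪gx, z2 - x⟫ = k * ⟪gx, d⟫ := by
    rw [hz2x, real_inner_smul_right]
  have exp6 : ‖z2 - x‖ ^ 2 = k ^ 2 * ‖d‖ ^ 2 := by
    rw [hz2x, norm_smul, mul_pow, Real.norm_eq_abs, sq_abs]
  have exp7 : ⟪gy, z2 - y⟫ = ⟪gy, x - y⟫ + k * ⟪gy, d⟫ := by
    rw [hz2y, inner_add_right, real_inner_smul_right]
  have exp8 : ‖z2 - y‖ ^ 2 = ‖x - y‖ ^ 2 + 2 * (k * ⟪x - y, d⟫) + k ^ 2 * ‖d‖ ^ 2 := by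
    rw [hz2y, @norm_add_sq_real, real_inner_smul_right, norm_smul, mul_pow, Real.norm_eq_abs, sq_abs]
  -- four inequalities
  have hB1 := hgy z1
  have hAx := descent L mu f hup x gx hgx z1
  have hB2 := hgx z2
  have hAy := descent L mu f hup y gy hgy z2
  rw [exp1, exp2] at hB1
  rw [exp3, exp4] at hAx
  rw [exp5, exp6] at hB2
  rw [exp7, exp8] at hAy
  have hs1 : 2 * (k * ⟪gx, d⟫) - 2 * (k * ⟪gy, d⟫) + mu * (k ^ 2 * ‖d‖ ^ 2)
      + ⟪gx, x - y⟫ - ⟪gy, x - y⟫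
      ≤ 2 * L * (k * ⟪x - y, d⟫) + L * (k ^ 2 * ‖d‖ ^ 2) + L * ‖x - y‖ ^ 2 := by
    linarith [hB1, hAx, hB2, hAy]
  -- scalar identities
  have rP : ⟪gx - gy, x - y⟫ = ⟪gx, x - y⟫ - ⟪gy, x - y⟫ := inner_sub_left gx gy (x - y)
  have r1 : ⟪gx, d⟫ - ⟪gy, d⟫ = ‖gx - gy‖ ^ 2 - L * ⟪gx - gy, x - y⟫ := by
    rw [← inner_sub_left, hdg, inner_sub_right, real_inner_smul_right,
      real_inner_self_eq_norm_sq]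
  have r2 : ⟪x - y, d⟫ = ⟪gx - gy, x - y⟫ - L * ‖x - y‖ ^ 2 := by
    rw [hdg, inner_sub_right, real_inner_smul_right, real_inner_self_eq_norm_sq,
      real_inner_comm (x - y) (gx - gy)]
  have r3 : ‖d‖ ^ 2 = ‖gx - gy‖ ^ 2 - 2 * L * ⟪gx - gy, x - y⟫ + L ^ 2 * ‖x - y‖ ^ 2 := by
    rw [hdg, @norm_sub_sq_real, real_inner_smul_right, norm_smul, mul_pow, Real.norm_eq_abs, sq_abs]; ring
  -- premultiplied versions
  have kr1 : k * ⟪gx, d⟫ - k * ⟪gy, d⟫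
      = k * ‖gx - gy‖ ^ 2 - L * (k * ⟪gx - gy, x - y⟫) := by linear_combination k * r1
  have kr2 : 2 * L * (k * ⟪x - y, d⟫)
      = 2 * L * (k * ⟪gx - gy, x - y⟫) - 2 * (L ^ 2) * (k * ‖x - y‖ ^ 2) := by
    linear_combination (2 * L * k) * r2
  have kr3 : k * ‖d‖ ^ 2
      = k * ‖gx - gy‖ ^ 2 - 2 * L * (k * ⟪gx - gy, x - y⟫)
        + L ^ 2 * (k * ‖x - y‖ ^ 2) := by linear_combination k * r3
  have kk : mu * (k ^ 2 * ‖d‖ ^ 2) - L * (k ^ 2 * ‖d‖ ^ 2) = -(k * ‖d‖ ^ 2) := by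
    linear_combination (-(k * ‖d‖ ^ 2)) * hk
  have hs2 : k * ‖gx - gy‖ ^ 2 - 2 * L * (k * ⟪gx - gy, x - y⟫)
      + L ^ 2 * (k * ‖x - y‖ ^ 2) + ⟪gx - gy, x - y⟫ - L * ‖x - y‖ ^ 2 ≤ 0 := by
    linarith [hs1, kr1, kr2, kr3, kk, rP]
  -- multiply by (L - mu)
  have hM2 := mul_le_mul_of_nonneg_left hs2 hMpos.le
  have mA : (L - mu) * (k * ‖gx - gy‖ ^ 2) = ‖gx - gy‖ ^ 2 := by
    linear_combination ‖gx - gy‖ ^ 2 * hk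
  have mP : (L - mu) * (L * (k * ⟪gx - gy, x - y⟫)) = L * ⟪gx - gy, x - y⟫ := by
    linear_combination (L * ⟪gx - gy, x - y⟫) * hk
  have mB : (L - mu) * (L ^ 2 * (k * ‖x - y‖ ^ 2)) = L ^ 2 * ‖x - y‖ ^ 2 := by
    linear_combination (L ^ 2 * ‖x - y‖ ^ 2) * hk
  have hkey : ‖gx - gy‖ ^ 2 + mu * L * ‖x - y‖ ^ 2 ≤ (L + mu) * ⟪gx - gy, x - y⟫ := by
    linarith [hM2, mA, mP, mB]
  -- conclude
  have hpos : (0:ℝ) < L * (L - mu) := by positivity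
  have hdiv : (1 / L) * ‖gx - gy‖ ^ 2 + mu / (L * (L - mu)) * ‖d‖ ^ 2
      = ((L - mu) * ‖gx - gy‖ ^ 2 + mu * ‖d‖ ^ 2) / (L * (L - mu)) := by
    field_simp
  rw [show gx - gy - L • (x - y) = d from hdg.symm, ge_iff_le, hdiv, div_le_iff₀ hpos]
  have hkeyL := mul_le_mul_of_nonneg_left hkey hL.le
  have muC : mu * ‖d‖ ^ 2 = mu * ‖gx - gy‖ ^ 2 - 2 * L * (mu * ⟪gx - gy, x - y⟫)
      + L ^ 2 * (mu * ‖x - y‖ ^ 2) := by linear_combination mu * r3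
  linarith [hkeyL, muC]
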